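/- Let n ≥ 2, l a positive integer, r a prime with gcd(l, r) = 1, and m ≥ 0. Then Σ_{d | l} π_n(r^{m+1} l / d) = n^{r^{m+1} l} − n^{r^m l}, where π_n(k) counts primitive words of length k over an alphabet of size n. -/

import Mathlib

variable {A : Type*}

/-- k-fold concatenation of a word with itself. -/
def pw (w : List A) : ℕ → List A
  | 0 => []
  | n + 1 => w ++ pw w n

/-- A nonempty word is primitive if it is not a proper power. -/
def Primitive (w : List A) : Prop :=
  w ≠ [] ∧ ∀ (v : List A) (m : ℕ), w = pw v m → m = 1

/-- Number of primitive words of length k over an n-letter alphabet. -/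
noncomputable def piw (n k : ℕ) : ℕ :=
  Nat.card {w : List (Fin n) // w.length = k ∧ Primitive w}

theorem pw_zero (w : List A) : pw w 0 = [] := rfl
theorem pw_succ (w : List A) (n : ℕ) : pw w (n+1) = w ++ pw w n := rfl
theorem pw_one (w : List A) : pw w 1 = w := by simp [pw]
theorem length_pw (w : List A) (n : ℕ) : (pw w n).length = n * w.length := by
  induction n with
  | zero => simp [pw]
  | succ k ih => simp [pw, ih]; ring
theorem pw_add (w : List A) (a b : ℕ) : pw w (a + b) = pw w a ++ pw w b := by
  induction a with
  | zero => simp [pw]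
  | succ k ih => rw [Nat.succ_add, pw_succ, pw_succ, ih, List.append_assoc]
theorem pw_comm (w : List A) (n : ℕ) : w ++ pw w n = pw w n ++ w := by
  induction n with
  | zero => simp [pw]
  | succ k ih =>
    rw [pw_succ, ← List.append_assoc, List.append_assoc, ih, ← List.append_assoc, ih]
theorem pw_mul (w : List A) (a b : ℕ) : pw w (a * b) = pw (pw w a) b := by
  induction b with
  | zero => simp [pw]
  | succ k ih => rw [Nat.mul_succ, pw_add, pw_succ, ih, pw_comm]
theorem pw_shift (x z : List A) (b : ℕ) :
    x ++ pw (z ++ x) b = pw (x ++ z) b ++ x := by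
  induction b with
  | zero => simp [pw]
  | succ k ih =>
    simp only [pw_succ, List.append_assoc]
    rw [ih]
theorem pw_eq_nil_iff {w : List A} {n : ℕ} : pw w n = [] ↔ n = 0 ∨ w = [] := by
  constructor
  · intro h
    rcases n with _ | k
    · exact Or.inl rfl
    · right; rw [pw_succ] at h; exact (List.append_eq_nil_iff.mp h).1
  · rintro (rfl | rfl)
    · rfl
    · induction n with
      | zero => rfl
      | succ k ih => rw [pw_succ, List.nil_append]; exact ih
theorem eq_of_pw_eq {x y : List A} {k : ℕ} (hk : 0 < k) (hlen : x.length = y.length)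
    (h : pw x k = pw y k) : x = y := by
  obtain ⟨k, rfl⟩ := Nat.exists_eq_succ_of_ne_zero hk.ne'
  rw [pw_succ, pw_succ] at h
  exact List.append_inj_left h hlen

/-- commuting words have a common root -/
theorem comm_root : ∀ N (x y : List A), x.length + y.length ≤ N → x ++ y = y ++ x →
    ∃ t i j, x = pw t i ∧ y = pw t j := by
  intro N
  induction N with
  | zero =>
    intro x y hN _
    have hx : x = [] := List.length_eq_zero_iff.mp (by omega)
    have hy : y = [] := List.length_eq_zero_iff.mp (by omega)
    exact ⟨[], 0, 0, by simp [hx, pw], by simp [hy, pw]⟩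
  | succ N ih =>
    intro x y hN h
    rcases List.append_eq_append_iff.mp h with ⟨z, hy1, hy2⟩ | ⟨z, hx1, hx2⟩
    · -- y = x ++ z, y = z ++ x
      rcases eq_or_ne x [] with rfl | hx
      · exact ⟨y, 0, 1, rfl, (pw_one y).symm⟩
      · have hxz : x ++ z = z ++ x := by rw [← hy1, ← hy2]
        have hlen : x.length + z.length ≤ N := by
          have := congrArg List.length hy1
          simp at this
          have : 1 ≤ x.length := List.length_pos_iff.mpr hx
          omega
        obtain ⟨t, i, j, hxt, hzt⟩ := ih x z hlen hxz
        exact ⟨t, i, i + j, hxt, by rw [hy1, hxt, hzt, pw_add]⟩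
    · -- x = y ++ z, x = z ++ y
      rcases eq_or_ne y [] with rfl | hy
      · exact ⟨x, 1, 0, (pw_one x).symm, rfl⟩
      · have hyz : y ++ z = z ++ y := by rw [← hx1, ← hx2]
        have hlen : y.length + z.length ≤ N := by
          have := congrArg List.length hx1
          simp at this
          have : 1 ≤ y.length := List.length_pos_iff.mpr hy
          omega
        obtain ⟨t, i, j, hyt, hzt⟩ := ih y z hlen hyz
        exact ⟨t, i + j, i, by rw [hx1, hyt, hzt, pw_add], hyt⟩

/-- if powers of x and y agree, x and y commute; assuming |x| ≤ |y| -/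
theorem pow_comm_aux {x y : List A} {a b : ℕ} (hx : x ≠ []) (ha : 0 < a) (hb : 0 < b)
    (hlen : x.length ≤ y.length) (h : pw x a = pw y b) : x ++ y = y ++ x := by
  obtain ⟨a, rfl⟩ := Nat.exists_eq_succ_of_ne_zero ha.ne'
  obtain ⟨b, rfl⟩ := Nat.exists_eq_succ_of_ne_zero hb.ne'
  -- x is a prefix of y
  have h' : x ++ pw x a = y ++ pw y b := h
  obtain ⟨z, hyz⟩ : ∃ z, y = x ++ z := by
    rcases List.append_eq_append_iff.mp h' with ⟨z, h1, _⟩ | ⟨z, h1, _⟩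
    · exact ⟨z, h1⟩
    · have := congrArg List.length h1
      simp at this
      have hz : z = [] := List.length_eq_zero_iff.mp (by omega)
      exact ⟨[], by simp [h1, hz]⟩
  subst hyz
  -- shift: x ++ pw (z ++ x) (b+1) = pw (x ++ z) (b+1) ++ x
  have key : pw (z ++ x) (b+1) = pw (x ++ z) (b+1) := by
    have h1 : x ++ pw (z ++ x) (b+1) = pw (x ++ z) (b+1) ++ x := pw_shift x z (b+1)
    have h2 : pw (x ++ z) (b+1) ++ x = pw x (a+1) ++ x := by rw [h]
    have h3 : pw x (a+1) ++ x = x ++ pw x (a+1) := (pw_comm x (a+1)).symm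
    have h4 : x ++ pw (z ++ x) (b+1) = x ++ pw x (a+1) := by rw [h1, h2, h3]
    have h5 : pw (z ++ x) (b+1) = pw x (a+1) := by
      have := List.append_cancel_left h4
      exact this
    rw [h5, h]
  have hzx : z ++ x = x ++ z :=
    eq_of_pw_eq (Nat.succ_pos b) (by simp [Nat.add_comm]) key
  rw [List.append_assoc, hzx]

theorem pow_comm {x y : List A} {a b : ℕ} (hx : x ≠ []) (hy : y ≠ []) (ha : 0 < a)
    (hb : 0 < b) (h : pw x a = pw y b) : x ++ y = y ++ x := by
  rcases le_total x.length y.length with hle | hle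
  · exact pow_comm_aux hx ha hb hle h
  · exact (pow_comm_aux hy hb ha hle h.symm).symm

/-- uniqueness of the primitive root -/
theorem primitive_root_unique {u v : List A} {a b : ℕ} (hu : Primitive u) (hv : Primitive v)
    (ha : 0 < a) (hb : 0 < b) (h : pw u a = pw v b) : u = v := by
  have hcomm := pow_comm hu.1 hv.1 ha hb h
  obtain ⟨t, i, j, hut, hvt⟩ := comm_root (u.length + v.length) u v le_rfl hcomm
  have hi : i = 1 := hu.2 t i hut
  have hj : j = 1 := hv.2 t j hvt
  rw [hut, hvt, hi, hj]

/-- existence of the primitive root -/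
theorem primitive_root_exists : ∀ N (w : List A), w.length ≤ N → w ≠ [] →
    ∃ (u : List A) (e : ℕ), Primitive u ∧ 0 < e ∧ w = pw u e := by
  intro N
  induction N with
  | zero => intro w hN hw; exact absurd (List.length_eq_zero_iff.mp (by omega)) hw
  | succ N ih =>
    intro w hN hw
    by_cases hp : Primitive w
    · exact ⟨w, 1, hp, one_pos, (pw_one w).symm⟩
    · rw [Primitive, not_and_or] at hp
      rcases hp with hp | hp
      · exact absurd (not_not.mp hp) hw
      · push_neg at hp
        obtain ⟨v, m, hvm, hm⟩ := hp
        have hm0 : m ≠ 0 := by rintro rfl; exact hw hvm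
        have hv : v ≠ [] := by
          rintro rfl
          exact hw (by rw [hvm]; exact pw_eq_nil_iff.mpr (Or.inr rfl))
        have hm2 : 2 ≤ m := by omega
        have hvlen : v.length ≤ N := by
          have h1 := congrArg List.length hvm
          rw [length_pw] at h1
          have : 1 ≤ v.length := List.length_pos_iff.mpr hv
          nlinarith
        obtain ⟨u, e, hu, he, hve⟩ := ih v hvlen hv
        refine ⟨u, e * m, hu, by positivity, ?_⟩
        rw [hvm, hve, pw_mul]

instance fintypeLenEq (n k : ℕ) : Fintype {w : List (Fin n) // w.length = k} :=
  inferInstanceAs (Fintype (List.Vector (Fin n) k))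

instance finiteP (n d : ℕ) : Finite {w : List (Fin n) // w.length = d ∧ Primitive w} :=
  Finite.of_injective (fun x => (⟨x.1, x.2.1⟩ : {w : List (Fin n) // w.length = d}))
    (by intro a b h; have := congrArg Subtype.val h; simp at this; exact Subtype.ext this)

theorem sum_piw (n k : ℕ) (hk : 0 < k) :
    ∑ d ∈ k.divisors, piw n d = n ^ k := by
  classical
  haveI : ∀ d : {x // x ∈ k.divisors}, Fintype {w : List (Fin n) // w.length = d.1 ∧ Primitive w} :=
    fun d => Fintype.ofFinite _
  set G : (Σ d : {x // x ∈ k.divisors}, {w : List (Fin n) // w.length = d.1 ∧ Primitive w}) →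
      {w : List (Fin n) // w.length = k} :=
    fun p => ⟨pw p.2.1 (k / p.1.1), by
      rw [length_pw, p.2.2.1]
      exact Nat.div_mul_cancel (Nat.mem_divisors.mp p.1.2).1⟩ with hG
  have hinj : Function.Injective G := by
    rintro ⟨⟨d, hd⟩, v, hv, hvp⟩ ⟨⟨d', hd'⟩, v', hv', hvp'⟩ hGe
    have h0 : pw v (k/d) = pw v' (k/d') := congrArg Subtype.val hGe
    have hd0 : 0 < d := Nat.pos_of_mem_divisors hd
    have hd0' : 0 < d' := Nat.pos_of_mem_divisors hd'
    have he : 0 < k/d := Nat.div_pos (Nat.le_of_dvd hk (Nat.mem_divisors.mp hd).1) hd0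
    have he' : 0 < k/d' := Nat.div_pos (Nat.le_of_dvd hk (Nat.mem_divisors.mp hd').1) hd0'
    have hvv : v = v' := primitive_root_unique hvp hvp' he he' h0
    subst hvv
    have hdd : d = d' := by
      have h1 : v.length = d := hv
      have h2 : v.length = d' := hv'
      omega
    subst hdd
    rfl
  have hsurj : Function.Surjective G := by
    rintro ⟨w, hw⟩
    have hwne : w ≠ [] := by
      intro h; rw [h] at hw; simp at hw; omega
    obtain ⟨u, e, hu, he, hue⟩ := primitive_root_exists w.length w le_rfl hwne
    have hlen : k = e * u.length := by rw [← hw, hue, length_pw]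
    have hdvd : u.length ∣ k := ⟨e, by rw [hlen, mul_comm]⟩
    have hmem : u.length ∈ k.divisors := Nat.mem_divisors.mpr ⟨hdvd, hk.ne'⟩
    refine ⟨⟨⟨u.length, hmem⟩, ⟨u, rfl, hu⟩⟩, ?_⟩
    apply Subtype.ext
    show pw u (k / u.length) = w
    have hu0 : 0 < u.length := List.length_pos_iff.mpr hu.1
    have hke : k / u.length = e := by rw [hlen, Nat.mul_div_cancel _ hu0]
    rw [hke, hue]
  have hcard := Nat.card_eq_of_bijective G ⟨hinj, hsurj⟩
  rw [Nat.card_eq_fintype_card, Nat.card_eq_fintype_card, Fintype.card_sigma] at hcard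
  have hrhs : Fintype.card {w : List (Fin n) // w.length = k} = n ^ k := by
    have : Fintype.card {w : List (Fin n) // w.length = k}
        = Fintype.card (List.Vector (Fin n) k) := rfl
    rw [this, card_vector, Fintype.card_fin]
  rw [hrhs] at hcard
  rw [← hcard, ← Finset.sum_coe_sort k.divisors (fun d => piw n d)]
  refine Finset.sum_congr rfl fun d _ => ?_
  rw [piw, Nat.card_eq_fintype_card]

theorem divisors_split (l r m : ℕ) (hl : 0 < l) (hr : r.Prime) (hgcd : Nat.Coprime l r) :
    (r ^ (m + 1) * l).divisors
      = (r ^ m * l).divisors ∪ (l.divisors).image (fun d => r ^ (m + 1) * d) := by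
  have hr0 : 0 < r := hr.pos
  ext e
  simp only [Nat.mem_divisors, Finset.mem_union, Finset.mem_image]
  constructor
  · rintro ⟨hdvd, hne⟩
    by_cases hcase : r ^ (m+1) ∣ e
    · obtain ⟨d, rfl⟩ := hcase
      right
      exact ⟨d, ⟨(mul_dvd_mul_iff_left (pow_ne_zero (m+1) hr0.ne')).mp hdvd, hl.ne'⟩, rfl⟩
    · left
      have he0 : e ≠ 0 := by
        rintro rfl
        exact hcase (dvd_zero _)
      set i := e.factorization r with hi
      set c := e / r ^ i with hc
      have hco : ¬ r ∣ c := Nat.not_dvd_ordCompl hr he0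
      have hec : r ^ i * c = e := Nat.ordProj_mul_ordCompl_eq_self e r
      have hcdvd : c ∣ r ^ (m+1) * l := dvd_trans (Dvd.intro_left _ hec) hdvd
      have hcop : c.Coprime (r ^ (m+1)) :=
        Nat.Coprime.pow_right _ (Nat.coprime_comm.mp ((hr.coprime_iff_not_dvd).mpr hco))
      have hcl : c ∣ l := hcop.dvd_of_dvd_mul_left hcdvd
      have him : i ≤ m := by
        by_contra hgt
        exact hcase (dvd_trans (pow_dvd_pow r (by omega)) (Nat.ordProj_dvd e r))
      refine ⟨?_, by positivity⟩
      calc e = r ^ i * c := hec.symm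
        _ ∣ r ^ m * l := mul_dvd_mul (pow_dvd_pow r him) hcl
  · rintro (⟨hdvd, _⟩ | ⟨d, ⟨hd, _⟩, rfl⟩)
    · exact ⟨hdvd.trans (mul_dvd_mul (pow_dvd_pow r (Nat.le_succ m)) dvd_rfl),
        Nat.mul_ne_zero (pow_ne_zero _ hr0.ne') hl.ne'⟩
    · exact ⟨mul_dvd_mul_left _ hd, Nat.mul_ne_zero (pow_ne_zero _ hr0.ne') hl.ne'⟩

theorem divisors_disj (l r m : ℕ) (hl : 0 < l) (hr : r.Prime) (hgcd : Nat.gcd l r = 1) :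
    Disjoint ((r ^ m * l).divisors) ((l.divisors).image fun d => r ^ (m + 1) * d) := by
  have hr0 : 0 < r := hr.pos
  rw [Finset.disjoint_right]
  rintro e hmem hdiv
  obtain ⟨d, hd, rfl⟩ := Finset.mem_image.mp hmem
  have h1 : r ^ (m+1) ∣ r ^ m * l :=
    dvd_trans (dvd_mul_right _ _) (Nat.mem_divisors.mp hdiv).1
  have h2 : r ∣ l := by
    rw [pow_succ] at h1
    exact (mul_dvd_mul_iff_left (pow_ne_zero m hr0.ne')).mp h1
  have h3 : r ∣ Nat.gcd l r := Nat.dvd_gcd h2 dvd_rfl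
  rw [hgcd] at h3
  have := Nat.le_of_dvd one_pos h3
  have := hr.two_le
  omega

theorem sum_piw_eq (n l r m : ℕ) (hn : 2 ≤ n) (hl : 0 < l) (hr : r.Prime)
    (hgcd : Nat.gcd l r = 1) :
    (∑ d ∈ l.divisors, (piw n (r ^ (m + 1) * l / d) : ℤ)) =
      (n : ℤ) ^ (r ^ (m + 1) * l) - (n : ℤ) ^ (r ^ m * l) := by
  have hr0 : 0 < r := hr.pos
  have hK1 : 0 < r ^ (m+1) * l := by positivity
  have hK0 : 0 < r ^ m * l := by positivity
  have step1 : (∑ d ∈ l.divisors, (piw n (r ^ (m + 1) * l / d) : ℤ))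
      = ∑ d ∈ l.divisors, (piw n (r ^ (m+1) * d) : ℤ) := by
    rw [show (∑ d ∈ l.divisors, (piw n (r ^ (m + 1) * l / d) : ℤ))
        = ∑ d ∈ l.divisors, (fun d => (piw n (r ^ (m+1) * d) : ℤ)) (l / d) from
      Finset.sum_congr rfl fun d hd => by
        rw [Nat.mul_div_assoc _ (Nat.mem_divisors.mp hd).1]]
    exact Nat.sum_div_divisors l (fun d => (piw n (r ^ (m+1) * d) : ℤ))
  have himg : ∑ d ∈ l.divisors, (piw n (r ^ (m+1) * d) : ℤ)
      = ∑ e ∈ (l.divisors).image (fun d => r ^ (m+1) * d), (piw n e : ℤ) := by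
    rw [Finset.sum_image]
    intro x _ y _ h
    exact Nat.eq_of_mul_eq_mul_left (by positivity) h
  have hsplit := divisors_split l r m hl hr hgcd
  have hdisj := divisors_disj l r m hl hr hgcd
  have hunion : ∑ e ∈ (r ^ (m+1) * l).divisors, (piw n e : ℤ)
      = ∑ e ∈ (r ^ m * l).divisors, (piw n e : ℤ)
        + ∑ e ∈ (l.divisors).image (fun d => r ^ (m+1) * d), (piw n e : ℤ) := by
    rw [hsplit]
    exact Finset.sum_union hdisj
  have c1 : ∑ e ∈ (r ^ (m+1) * l).divisors, (piw n e : ℤ) = (n:ℤ) ^ (r ^ (m+1) * l) := by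
    exact_mod_cast congrArg (Nat.cast : ℕ → ℤ) (sum_piw n _ hK1)
  have c0 : ∑ e ∈ (r ^ m * l).divisors, (piw n e : ℤ) = (n:ℤ) ^ (r ^ m * l) := by
    exact_mod_cast congrArg (Nat.cast : ℕ → ℤ) (sum_piw n _ hK0)
  rw [step1, himg]
  rw [c1, c0] at hunion
  linarith
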